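/- Let B be a compact topological space and H a complex Hilbert space. Let U : B → B(H) be a strongly continuous map (for every x ∈ H the map b ↦ U(b)x is continuous) such that each U(b) is unitary, and let K : B → B(H) be a map, continuous in the operator norm, such that each K(b) is compact. Then each operator U(b)∘K(b)∘U(b)* is compact and the map b ↦ U(b)∘K(b)∘U(b)* is continuous in the operator norm. -/

import Mathlib

open Metric Set

section AuxLemmas
variable {H : Type*} [NormedAddCommGroup H] [InnerProductSpace ℂ H] [CompleteSpace H]

lemma isCompactOperator_star {T : H →L[ℂ] H} (hT : IsCompactOperator T) :
    IsCompactOperator (star T : H →L[ℂ] H) := by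
  have hS : IsCompactOperator (T.comp (star T)) := by
    have := hT.comp_clm (star T)
    rwa [← ContinuousLinearMap.coe_comp'] at this
  have hS' : IsCompactOperator ((T.comp (star T) : H →L[ℂ] H) : H →ₗ[ℂ] H) := by
    rw [ContinuousLinearMap.coe_coe]; exact hS
  have hS2 := hS'.isCompact_closure_image_closedBall 1
  rw [ContinuousLinearMap.coe_coe] at hS2
  refine ⟨closure ((star T : H →L[ℂ] H) '' closedBall (0:H) 1), ?_, ?_⟩
  · -- compactness of closure of star T '' closedBall
    refine TotallyBounded.isCompact_of_isClosed (TotallyBounded.closure ?_) isClosed_closure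
    rw [Metric.totallyBounded_iff]
    intro ε hε
    have htb : TotallyBounded ((T.comp (star T)) '' closedBall (0:H) 1) :=
      hS2.totallyBounded.subset subset_closure
    obtain ⟨t, hts, htf, hcover⟩ := finite_approx_of_totallyBounded htb (ε^2/8) (by positivity)
    choose! pre hpre1 hpre2 using fun c (hc : c ∈ t) => hts hc
    refine ⟨(fun c => star T (pre c)) '' t, htf.image _, ?_⟩
    rintro _ ⟨x, hx, rfl⟩
    obtain ⟨c, hc⟩ := mem_iUnion.mp (hcover (mem_image_of_mem _ hx))
    simp only [mem_iUnion, exists_prop] at hc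
    obtain ⟨hct, hcball⟩ := hc
    refine mem_iUnion.mpr ⟨star T (pre c), mem_iUnion.mpr ⟨mem_image_of_mem _ hct, ?_⟩⟩
    rw [mem_ball, dist_eq_norm]
    have key : ‖star T x - star T (pre c)‖^2 ≤ ε^2/8 * 2 := by
      have hz : star T x - star T (pre c) = star T (x - pre c) := (map_sub _ _ _).symm
      rw [hz, norm_sq_eq_re_inner (𝕜 := ℂ)]
      have hadj : (inner ℂ (star T (x - pre c)) (star T (x - pre c)) : ℂ)
          = inner ℂ ((T.comp (star T)) (x - pre c)) (x - pre c) := by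
        rw [ContinuousLinearMap.star_eq_adjoint, ContinuousLinearMap.adjoint_inner_right]
        rfl
      rw [hadj]
      have h1 : ‖(T.comp (star T)) (x - pre c)‖ < ε^2/8 := by
        have heq : (T.comp (star T)) (x - pre c)
            = (T.comp (star T)) x - (T.comp (star T)) (pre c) := map_sub _ _ _
        rw [heq, ← dist_eq_norm]
        have := hcball
        rw [mem_ball, ← hpre2 c hct] at this
        exact this
      have h2 : ‖x - pre c‖ ≤ 2 := by
        have hx1 : ‖x‖ ≤ 1 := mem_closedBall_zero_iff.mp hx
        have hx2 : ‖pre c‖ ≤ 1 := mem_closedBall_zero_iff.mp (hpre1 c hct)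
        calc ‖x - pre c‖ ≤ ‖x‖ + ‖pre c‖ := norm_sub_le _ _
          _ ≤ 2 := by linarith
      calc RCLike.re (inner ℂ ((T.comp (star T)) (x - pre c)) (x - pre c))
          ≤ ‖(inner ℂ ((T.comp (star T)) (x - pre c)) (x - pre c) : ℂ)‖ := RCLike.re_le_norm _
        _ ≤ ‖(T.comp (star T)) (x - pre c)‖ * ‖x - pre c‖ := norm_inner_le_norm _ _
        _ ≤ ε^2/8 * 2 := by
            nlinarith [norm_nonneg ((T.comp (star T)) (x - pre c)), norm_nonneg (x - pre c)]
    nlinarith [norm_nonneg (star T x - star T (pre c))]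
  · exact Filter.mem_of_superset (closedBall_mem_nhds 0 one_pos)
      (fun x hx => subset_closure (mem_image_of_mem _ hx))

lemma opNorm_le_of_unit_ball' {f : H →L[ℂ] H} {C : ℝ} (hC : 0 ≤ C)
    (h : ∀ x : H, ‖x‖ ≤ 1 → ‖f x‖ ≤ C) : ‖f‖ ≤ C := by
  refine f.opNorm_le_bound hC fun x => ?_
  rcases eq_or_ne x 0 with rfl | hx
  · simp
  · have hx' : (0:ℝ) < ‖x‖ := norm_pos_iff.mpr hx
    have := h ((‖x‖:ℂ)⁻¹ • x) (by rw [norm_smul]; simp [hx'.ne'])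
    rw [map_smul, norm_smul] at this
    simp only [norm_inv, Complex.norm_real, norm_norm] at this
    calc ‖f x‖ = ‖x‖ * (‖x‖⁻¹ * ‖f x‖) := by field_simp
      _ ≤ ‖x‖ * C := mul_le_mul_of_nonneg_left (by simpa using this) hx'.le
      _ = C * ‖x‖ := mul_comm _ _

lemma cont_comp_compact {B : Type*} [TopologicalSpace B]
    (A : B → (H →L[ℂ] H)) (hb : ∀ b, ‖A b‖ ≤ 1)
    (hs : ∀ x : H, Continuous fun b => A b x)
    (T : H →L[ℂ] H) (hT : IsCompactOperator T) :
    Continuous fun b => A b * T := by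
  rw [continuous_iff_continuousAt]
  intro b₀
  rw [ContinuousAt, Metric.tendsto_nhds]
  intro ε hε
  have hT' : IsCompactOperator (T : H →ₗ[ℂ] H) := by
    rw [ContinuousLinearMap.coe_coe]; exact hT
  have hSc := hT'.isCompact_closure_image_closedBall 1
  rw [ContinuousLinearMap.coe_coe] at hSc
  obtain ⟨t, hts, htf, hcover⟩ :=
    finite_approx_of_totallyBounded hSc.totallyBounded (ε/8) (by positivity)
  have hev : ∀ᶠ b in nhds b₀, ∀ y ∈ t, ‖A b y - A b₀ y‖ < ε/8 := by
    rw [Filter.eventually_all_finite htf]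
    intro y hy
    have hcy : Continuous fun b => ‖A b y - A b₀ y‖ := ((hs y).sub continuous_const).norm
    have h0 : b₀ ∈ {b | ‖A b y - A b₀ y‖ < ε/8} := by simp; positivity
    exact (isOpen_lt hcy continuous_const).eventually_mem h0
  filter_upwards [hev] with b hb'
  rw [dist_eq_norm]
  have hbound : ‖A b * T - A b₀ * T‖ ≤ ε/2 := by
    apply opNorm_le_of_unit_ball' (by positivity)
    intro x hx
    have hTx : T x ∈ closure (T '' closedBall (0:H) 1) :=
      subset_closure (mem_image_of_mem _ (mem_closedBall_zero_iff.mpr hx))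
    obtain ⟨y, hy⟩ := mem_iUnion.mp (hcover hTx)
    simp only [mem_iUnion, exists_prop] at hy
    obtain ⟨hyt, hyb⟩ := hy
    rw [mem_ball, dist_comm, dist_eq_norm] at hyb
    have hsplit : (A b * T - A b₀ * T) x
        = A b (T x - y) + (A b y - A b₀ y) + A b₀ (y - T x) := by
      simp only [ContinuousLinearMap.sub_apply, ContinuousLinearMap.mul_apply, map_sub]
      abel
    rw [hsplit]
    have e1 : ‖A b (T x - y)‖ ≤ ε/8 := by
      calc ‖A b (T x - y)‖ ≤ ‖A b‖ * ‖T x - y‖ := (A b).le_opNorm _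
        _ ≤ 1 * (ε/8) := by
            refine mul_le_mul (hb b) ?_ (norm_nonneg _) zero_le_one
            rw [show T x - y = -(y - T x) by abel, norm_neg]
            exact hyb.le
        _ = ε/8 := one_mul _
    have e3 : ‖A b₀ (y - T x)‖ ≤ ε/8 := by
      calc ‖A b₀ (y - T x)‖ ≤ ‖A b₀‖ * ‖y - T x‖ := (A b₀).le_opNorm _
        _ ≤ 1 * (ε/8) := mul_le_mul (hb b₀) hyb.le (norm_nonneg _) zero_le_one
        _ = ε/8 := one_mul _
    have e2 : ‖A b y - A b₀ y‖ ≤ ε/8 := (hb' y hyt).le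
    calc ‖A b (T x - y) + (A b y - A b₀ y) + A b₀ (y - T x)‖
        ≤ ‖A b (T x - y)‖ + ‖A b y - A b₀ y‖ + ‖A b₀ (y - T x)‖ := norm_add₃_le
      _ ≤ ε/2 := by linarith
  linarith [hbound]

end AuxLemmas

/-- Conjugating a norm-continuous family of compact operators by a strongly continuous
family of unitaries (over a compact parameter space) yields a norm-continuous family of
compact operators. -/
theorem unitary_conj_compact_continuous
    {B : Type*} [TopologicalSpace B] [CompactSpace B]
    {H : Type*} [NormedAddCommGroup H] [InnerProductSpace ℂ H] [CompleteSpace H]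
    (U : B → (H →L[ℂ] H))
    (hU : ∀ b, star (U b) * U b = 1 ∧ U b * star (U b) = 1)
    (hstrong : ∀ x : H, Continuous fun b => U b x)
    (K : B → (H →L[ℂ] H)) (hKcompact : ∀ b, IsCompactOperator (K b))
    (hKcont : Continuous K) :
    (∀ b, IsCompactOperator (U b * K b * star (U b))) ∧
      Continuous fun b => U b * K b * star (U b) := by
  have hmem : ∀ b, U b ∈ unitary (H →L[ℂ] H) := fun b => Unitary.mem_iff.mpr (hU b)
  have hUn : ∀ b, ‖U b‖ ≤ 1 := fun b =>
    (U b).opNorm_le_bound zero_le_one fun x => by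
      rw [ContinuousLinearMap.norm_map_of_mem_unitary (hmem b), one_mul]
  have hUsn : ∀ b, ‖star (U b)‖ ≤ 1 := fun b =>
    (star (U b)).opNorm_le_bound zero_le_one fun x => by
      rw [ContinuousLinearMap.norm_map_of_mem_unitary (Unitary.star_mem (hmem b)), one_mul]
  constructor
  · intro b
    have h2 := ((hKcompact b).clm_comp (U b)).comp_clm (star (U b))
    rwa [← ContinuousLinearMap.coe_comp', ← ContinuousLinearMap.coe_comp',
      ← ContinuousLinearMap.mul_def, ← ContinuousLinearMap.mul_def] at h2
  · rw [continuous_iff_continuousAt]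
    intro b₀
    have c1 : Continuous fun b => U b * K b₀ :=
      cont_comp_compact U hUn hstrong (K b₀) (hKcompact b₀)
    have c2 : Continuous fun b => U b * star (K b₀) :=
      cont_comp_compact U hUn hstrong (star (K b₀)) (isCompactOperator_star (hKcompact b₀))
    rw [ContinuousAt, tendsto_iff_norm_sub_tendsto_zero]
    have hg : Filter.Tendsto (fun b => ‖K b - K b₀‖ + ‖U b * K b₀ - U b₀ * K b₀‖
        + ‖U b * star (K b₀) - U b₀ * star (K b₀)‖) (nhds b₀) (nhds 0) := by
      have t1 := tendsto_iff_norm_sub_tendsto_zero.mp (hKcont.tendsto b₀)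
      have t2 := tendsto_iff_norm_sub_tendsto_zero.mp (c1.tendsto b₀)
      have t3 := tendsto_iff_norm_sub_tendsto_zero.mp (c2.tendsto b₀)
      simpa using (t1.add t2).add t3
    refine squeeze_zero (fun b => norm_nonneg _) (fun b => ?_) hg
    have hdecomp : U b * K b * star (U b) - U b₀ * K b₀ * star (U b₀)
        = U b * (K b - K b₀) * star (U b) + (U b * K b₀ - U b₀ * K b₀) * star (U b)
          + U b₀ * K b₀ * (star (U b) - star (U b₀)) := by noncomm_ring
    rw [hdecomp]
    have e1 : ‖U b * (K b - K b₀) * star (U b)‖ ≤ ‖K b - K b₀‖ := by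
      have h1 := norm_mul_le (U b * (K b - K b₀)) (star (U b))
      have h2 := norm_mul_le (U b) (K b - K b₀)
      nlinarith [norm_nonneg (U b * (K b - K b₀)), norm_nonneg (K b - K b₀),
        norm_nonneg (star (U b)), hUn b, hUsn b]
    have e2 : ‖(U b * K b₀ - U b₀ * K b₀) * star (U b)‖ ≤ ‖U b * K b₀ - U b₀ * K b₀‖ := by
      have h1 := norm_mul_le (U b * K b₀ - U b₀ * K b₀) (star (U b))
      nlinarith [norm_nonneg (U b * K b₀ - U b₀ * K b₀), hUsn b]
    have e3 : ‖U b₀ * K b₀ * (star (U b) - star (U b₀))‖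
        ≤ ‖U b * star (K b₀) - U b₀ * star (K b₀)‖ := by
      have key : K b₀ * (star (U b) - star (U b₀))
          = star (U b * star (K b₀) - U b₀ * star (K b₀)) := by
        rw [star_sub, star_mul, star_mul, star_star, mul_sub]
      calc ‖U b₀ * K b₀ * (star (U b) - star (U b₀))‖
          = ‖U b₀ * (K b₀ * (star (U b) - star (U b₀)))‖ := by rw [mul_assoc]
        _ ≤ ‖U b₀‖ * ‖K b₀ * (star (U b) - star (U b₀))‖ := norm_mul_le _ _
        _ ≤ 1 * ‖K b₀ * (star (U b) - star (U b₀))‖ :=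
            mul_le_mul_of_nonneg_right (hUn b₀) (norm_nonneg _)
        _ = ‖K b₀ * (star (U b) - star (U b₀))‖ := one_mul _
        _ = ‖U b * star (K b₀) - U b₀ * star (K b₀)‖ := by rw [key, norm_star]
    calc ‖U b * (K b - K b₀) * star (U b) + (U b * K b₀ - U b₀ * K b₀) * star (U b)
          + U b₀ * K b₀ * (star (U b) - star (U b₀))‖
        ≤ ‖U b * (K b - K b₀) * star (U b)‖ + ‖(U b * K b₀ - U b₀ * K b₀) * star (U b)‖
          + ‖U b₀ * K b₀ * (star (U b) - star (U b₀))‖ := norm_add₃_le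
      _ ≤ _ := by linarith
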